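/- arXiv:2511.14609 — 2 statements merged into one kernel-verified Lean document; each statement's English description precedes it below -/
import Mathlib

section
/- Let k, η, l ∈ ℝ with k ≠ 0, and let μ > 0. Define f̂(t) = exp(−μ ∫₀ᵗ (k² + (η − kτ)² + l²) dτ) · f̂_in for a constant f̂_in ∈ ℂ. Then |f̂(t)| ≤ exp(−(1/12)·μ·k²·t³) · |f̂_in| for all t ≥ 0. -/
/-- The Fourier mode solution of the advection–diffusion equation along Couette
characteristics decays at enhanced dissipation rate `exp(−μk²t³/12)`. -/
theorem stmt1 (k η l μ : ℝ) (hk : k ≠ 0) (hμ : 0 < μ) (fin : ℂ) (fhat : ℝ → ℂ)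
    (hf : ∀ t : ℝ, fhat t =
      (Real.exp (-μ * ∫ τ in (0:ℝ)..t, (k ^ 2 + (η - k * τ) ^ 2 + l ^ 2))) • fin) :
    ∀ t : ℝ, 0 ≤ t →
      ‖fhat t‖ ≤ Real.exp (-(1 / 12) * μ * k ^ 2 * t ^ 3) * ‖fin‖ := by
  intro t ht
  have hI : (∫ τ in (0:ℝ)..t, (k ^ 2 + (η - k * τ) ^ 2 + l ^ 2))
      = (k ^ 2 + η ^ 2 + l ^ 2) * t - η * k * t ^ 2 + k ^ 2 * t ^ 3 / 3 := by
    have := intervalIntegral.integral_eq_sub_of_hasDerivAt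
      (f := fun τ : ℝ => (k ^ 2 + η ^ 2 + l ^ 2) * τ - η * k * τ ^ 2 + k ^ 2 * τ ^ 3 / 3)
      (f' := fun τ : ℝ => k ^ 2 + (η - k * τ) ^ 2 + l ^ 2) (a := 0) (b := t)
      (fun τ _ => by
        have h1 : HasDerivAt (fun τ : ℝ => (k ^ 2 + η ^ 2 + l ^ 2) * τ - η * k * τ ^ 2
            + k ^ 2 * τ ^ 3 / 3)
            ((k ^ 2 + η ^ 2 + l ^ 2) - η * k * (2 * τ) + k ^ 2 * (3 * τ ^ 2) / 3) τ := by
          have := ((hasDerivAt_id τ).const_mul (k ^ 2 + η ^ 2 + l ^ 2)).sub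
            (((hasDerivAt_pow 2 τ).const_mul (η * k)))
          have h2 := this.add (((hasDerivAt_pow 3 τ).const_mul (k ^ 2)).div_const 3)
          have h3 : HasDerivAt (fun τ : ℝ => (k ^ 2 + η ^ 2 + l ^ 2) * τ - η * k * τ ^ 2
              + k ^ 2 * τ ^ 3 / 3) ((k ^ 2 + η ^ 2 + l ^ 2) * 1 - η * k * ((2:ℕ) * τ ^ (2 - 1))
              + k ^ 2 * ((3:ℕ) * τ ^ (3 - 1)) / 3) τ := h2
          convert h3 using 1
          norm_num
        refine h1.congr_deriv ?_
        ring)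
      (by
        apply Continuous.intervalIntegrable
        continuity)
    simpa using this
  have hbound : k ^ 2 * t ^ 3 / 12 ≤ ∫ τ in (0:ℝ)..t, (k ^ 2 + (η - k * τ) ^ 2 + l ^ 2) := by
    rw [hI]
    nlinarith [sq_nonneg (η - k * t / 2), sq_nonneg k, sq_nonneg l, mul_nonneg ht (sq_nonneg (η - k * t / 2)), mul_nonneg ht (sq_nonneg k), mul_nonneg ht (sq_nonneg l)]
  rw [hf t, norm_smul]
  have : ‖Real.exp (-μ * ∫ τ in (0:ℝ)..t, (k ^ 2 + (η - k * τ) ^ 2 + l ^ 2))‖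
      = Real.exp (-μ * ∫ τ in (0:ℝ)..t, (k ^ 2 + (η - k * τ) ^ 2 + l ^ 2)) := by
    rw [Real.norm_eq_abs, abs_of_pos (Real.exp_pos _)]
  rw [this]
  apply mul_le_mul_of_nonneg_right _ (norm_nonneg fin)
  apply Real.exp_le_exp.mpr
  nlinarith [hμ.le]
end

section
/- Define m(t) at fixed Fourier mode (k, l) ∈ ℤ² and η ∈ ℝ by m(t,k,η,l) = exp(C₀·∫_{−∞}^t Σ_{(i,j) ∈ ℤ², j ≠ 0} j²/(j² + (η − jτ)² + i²) · ⟨(j−k, i−l)⟩^(−4) dτ) with C₀ > 0. Then m is well defined and uniformly bounded: there is a constant K (depending only on C₀) such that 1 ≤ m(t,k,η,l) ≤ K for all t ∈ ℝ, (k,l) ∈ ℤ², η ∈ ℝ. -/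
open MeasureTheory Real

lemma sumNat : Summable (fun n : ℕ => (1 + (n:ℝ)^2)⁻¹) := by
  have h : Summable (fun n : ℕ => 1 / ((n:ℝ))^2) := Real.summable_one_div_nat_pow.2 one_lt_two
  have h2 : Summable (fun n : ℕ => 1 / (((n+1:ℕ)):ℝ)^2) :=
    (summable_nat_add_iff (f := fun n : ℕ => 1/(n:ℝ)^2) 1).2 h
  have h3 : Summable (fun n : ℕ => (1 + ((n+1:ℕ):ℝ)^2)⁻¹) := by
    refine h2.of_nonneg_of_le (fun n => by positivity) (fun n => ?_)
    rw [one_div]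
    apply inv_anti₀ (by positivity)
    push_cast
    nlinarith [sq_nonneg ((n:ℝ)+1)]
  exact (summable_nat_add_iff (f := fun n : ℕ => (1 + (n:ℝ)^2)⁻¹) 1).1 h3

lemma sumInt : Summable (fun n : ℤ => (1 + (n:ℝ)^2)⁻¹) := by
  refine Summable.of_nat_of_neg ?_ ?_ <;>
  · refine Summable.congr sumNat fun n => ?_
    push_cast; ring_nf



lemma sumV : Summable (fun p : ℤ × ℤ => ((1 + (p.2:ℝ)^2 + (p.1:ℝ)^2)^2)⁻¹) := by
  have h := (sumInt.mul_of_nonneg sumInt (fun n => by positivity) (fun n => by positivity) :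
    Summable fun p : ℤ × ℤ => (1 + (p.1:ℝ)^2)⁻¹ * (1 + (p.2:ℝ)^2)⁻¹)
  refine h.of_nonneg_of_le (fun p => by positivity) (fun p => ?_)
  rw [← mul_inv]
  apply inv_anti₀ (by positivity)
  nlinarith [sq_nonneg ((p.1:ℝ)*(p.2:ℝ)), sq_nonneg (p.1:ℝ), sq_nonneg (p.2:ℝ),
    sq_nonneg ((p.1:ℝ)^2 - (p.2:ℝ)^2)]

lemma sumW (k l : ℤ) : Summable (fun p : ℤ × ℤ =>
    ((1 + ((p.2 - k : ℤ):ℝ)^2 + ((p.1 - l : ℤ):ℝ)^2)^2)⁻¹) := by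
  have h := sumV.comp_injective (Equiv.prodCongr (Equiv.subRight l) (Equiv.subRight k)).injective
  exact h.congr fun p => by simp [Function.comp, Equiv.prodCongr, Equiv.subRight]

lemma sumW_eq (k l : ℤ) : (∑' p : ℤ × ℤ, ((1 + ((p.2 - k : ℤ):ℝ)^2 + ((p.1 - l : ℤ):ℝ)^2)^2)⁻¹)
    = ∑' p : ℤ × ℤ, ((1 + (p.2:ℝ)^2 + (p.1:ℝ)^2)^2)⁻¹ := by
  rw [← (Equiv.prodCongr (Equiv.subRight l) (Equiv.subRight k)).tsum_eq
    (fun p : ℤ × ℤ => ((1 + (p.2:ℝ)^2 + (p.1:ℝ)^2)^2)⁻¹)]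
  exact tsum_congr fun p => by simp [Equiv.prodCongr, Equiv.subRight]


lemma lorentz_int {c : ℝ} (hc : 0 < c) : Integrable (fun u : ℝ => (c^2 + u^2)⁻¹) := by
  have h : (fun u : ℝ => (c^2 + u^2)⁻¹) = fun u => (c^2)⁻¹ * (1 + (c⁻¹ * u)^2)⁻¹ := by
    funext u; rw [← mul_inv]; congr 1; field_simp
  rw [h]
  exact (integrable_inv_one_add_sq.comp_mul_left' (inv_ne_zero hc.ne')).const_mul _

lemma lorentz_eval {c : ℝ} (hc : 0 < c) : ∫ u : ℝ, (c^2 + u^2)⁻¹ = π / c := by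
  have h : (fun u : ℝ => (c^2 + u^2)⁻¹) = fun u => (c^2)⁻¹ * (1 + (c⁻¹ * u)^2)⁻¹ := by
    funext u; rw [← mul_inv]; congr 1; field_simp
  rw [h, MeasureTheory.integral_const_mul,
    Measure.integral_comp_inv_mul_left (fun x : ℝ => (1 + x^2)⁻¹) c,
    integral_univ_inv_one_add_sq, abs_of_pos hc, smul_eq_mul]
  field_simp

lemma affine_int {c : ℝ} (hc : 0 < c) {j : ℝ} (hj : j ≠ 0) (η : ℝ) :
    Integrable (fun τ : ℝ => (c^2 + (η - j*τ)^2)⁻¹) := by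
  have h1 : Integrable (fun x : ℝ => (c^2 + (x - η)^2)⁻¹) :=
    (lorentz_int hc).comp_sub_right η
  have h2 := h1.comp_mul_left' hj
  exact h2.congr (Filter.Eventually.of_forall fun τ => by ring_nf)

lemma affine_eval {c : ℝ} (hc : 0 < c) {j : ℝ} (hj : j ≠ 0) (η : ℝ) :
    ∫ τ : ℝ, (c^2 + (η - j*τ)^2)⁻¹ = π / (c * |j|) := by
  have h : (fun τ : ℝ => (c^2 + (η - j*τ)^2)⁻¹)
      = fun τ => (fun x : ℝ => (c^2 + (x - η)^2)⁻¹) (j * τ) := by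
    funext τ; ring_nf
  rw [h, Measure.integral_comp_mul_left (fun x : ℝ => (c^2 + (x - η)^2)⁻¹) j,
    integral_sub_right_eq_self (fun x : ℝ => (c^2 + x^2)⁻¹) η, lorentz_eval hc, smul_eq_mul,
    abs_inv]
  rw [div_mul_eq_div_div, eq_comm, div_eq_iff (abs_ne_zero.2 hj)]
  field_simp



lemma one_le_sq_cast {j : ℤ} (hj : j ≠ 0) : (1:ℝ) ≤ (j:ℝ)^2 := by
  have h1 : 1 ≤ |j| := Int.one_le_abs (by simpa using hj)
  have : (1:ℤ) ≤ j^2 := by nlinarith [sq_abs j]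
  exact_mod_cast this

noncomputable def mTerm (k l : ℤ) (η : ℝ) (p : ℤ × ℤ) (τ : ℝ) : ℝ :=
  if p.2 ≠ 0 then
    (p.2:ℝ) ^ 2 /
      (((p.2:ℝ) ^ 2 + (η - (p.2:ℝ) * τ) ^ 2 + (p.1:ℝ) ^ 2) *
        (1 + ((p.2 - k : ℤ):ℝ) ^ 2 + ((p.1 - l : ℤ):ℝ) ^ 2) ^ 2)
  else 0

noncomputable def mW (k l : ℤ) (p : ℤ × ℤ) : ℝ :=
  ((1 + ((p.2 - k : ℤ):ℝ) ^ 2 + ((p.1 - l : ℤ):ℝ) ^ 2) ^ 2)⁻¹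

variable {k l : ℤ} {η : ℝ}

lemma mW_pos (p : ℤ × ℤ) : 0 < mW k l p := by unfold mW; positivity

lemma mTerm_nonneg (p : ℤ × ℤ) (τ : ℝ) : 0 ≤ mTerm k l η p τ := by
  unfold mTerm; split
  · positivity
  · exact le_refl 0

lemma mTerm_le (p : ℤ × ℤ) (τ : ℝ) : mTerm k l η p τ ≤ mW k l p := by
  unfold mTerm mW
  split
  case isTrue hj =>
    have hj2 : (1:ℝ) ≤ (p.2:ℝ)^2 := one_le_sq_cast hj
    set D := (1 + ((p.2 - k : ℤ):ℝ) ^ 2 + ((p.1 - l : ℤ):ℝ) ^ 2) ^ 2 with hD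
    have hDpos : 0 < D := by positivity
    rw [div_le_iff₀ (by nlinarith [sq_nonneg (η - (p.2:ℝ)*τ), sq_nonneg (p.1:ℝ)])]
    rw [inv_mul_eq_div, le_div_iff₀ hDpos]
    nlinarith [sq_nonneg (η - (p.2:ℝ)*τ), sq_nonneg (p.1:ℝ)]
  case isFalse => positivity

lemma mTerm_repr (p : ℤ × ℤ) (hj : p.2 ≠ 0) :
    mTerm k l η p = fun τ =>
      ((p.2:ℝ)^2 * mW k l p) *
        ((Real.sqrt ((p.2:ℝ)^2 + (p.1:ℝ)^2))^2 + (η - (p.2:ℝ)*τ)^2)⁻¹ := by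
  funext τ
  have hj2 : (1:ℝ) ≤ (p.2:ℝ)^2 := one_le_sq_cast hj
  have hs : (Real.sqrt ((p.2:ℝ)^2 + (p.1:ℝ)^2))^2 = (p.2:ℝ)^2 + (p.1:ℝ)^2 :=
    Real.sq_sqrt (by positivity)
  unfold mTerm mW
  rw [if_pos hj, hs]
  rw [div_eq_iff (by positivity)]
  field_simp
  ring

lemma mTerm_cont (p : ℤ × ℤ) : Continuous (mTerm k l η p) := by
  unfold mTerm
  split
  case isTrue hj =>
    have hj2 : (1:ℝ) ≤ (p.2:ℝ)^2 := one_le_sq_cast hj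
    apply Continuous.div continuous_const (by fun_prop)
    intro τ
    have h1 := sq_nonneg (η - (p.2:ℝ)*τ)
    have h2 := sq_nonneg (p.1:ℝ)
    positivity
  case isFalse => exact continuous_const

lemma mTerm_zero (p : ℤ × ℤ) (hj : ¬ p.2 ≠ 0) : mTerm k l η p = fun _ => 0 :=
  funext fun τ => by unfold mTerm; rw [if_neg hj]

lemma mTerm_integrable (p : ℤ × ℤ) : Integrable (mTerm k l η p) := by
  by_cases hj : p.2 ≠ 0
  · rw [mTerm_repr p hj]
    have hj2 : (1:ℝ) ≤ (p.2:ℝ)^2 := one_le_sq_cast hj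
    have hcpos : 0 < Real.sqrt ((p.2:ℝ)^2 + (p.1:ℝ)^2) := Real.sqrt_pos.2 (by positivity)
    have hjne : ((p.2:ℝ)) ≠ 0 := Int.cast_ne_zero.2 hj
    exact (affine_int hcpos hjne η).const_mul _
  · rw [mTerm_zero p hj]
    exact integrable_zero _ _ _

lemma mTerm_integral_le (p : ℤ × ℤ) : ∫ τ : ℝ, mTerm k l η p τ ≤ π * mW k l p := by
  by_cases hj : p.2 ≠ 0
  · rw [mTerm_repr p hj]
    have hj2 : (1:ℝ) ≤ (p.2:ℝ)^2 := one_le_sq_cast hj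
    set c := Real.sqrt ((p.2:ℝ)^2 + (p.1:ℝ)^2) with hcdef
    have hcpos : 0 < c := Real.sqrt_pos.2 (by positivity)
    have hjne : ((p.2:ℝ)) ≠ 0 := Int.cast_ne_zero.2 hj
    rw [MeasureTheory.integral_const_mul, affine_eval hcpos hjne η]
    have hjc : |(p.2:ℝ)| ≤ c := by
      rw [← Real.sqrt_sq_eq_abs, hcdef]
      exact Real.sqrt_le_sqrt (by nlinarith [sq_nonneg (p.1:ℝ)])
    have hwpos := mW_pos (k := k) (l := l) p
    have key : (p.2:ℝ)^2 / (c * |(p.2:ℝ)|) ≤ 1 := by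
      rw [div_le_one (by positivity)]
      nlinarith [sq_abs ((p.2:ℝ)), abs_nonneg ((p.2:ℝ))]
    calc (p.2:ℝ)^2 * mW k l p * (π / (c * |(p.2:ℝ)|))
        = (π * mW k l p) * ((p.2:ℝ)^2 / (c * |(p.2:ℝ)|)) := by ring
      _ ≤ (π * mW k l p) * 1 :=
          mul_le_mul_of_nonneg_left key (mul_nonneg Real.pi_pos.le hwpos.le)
      _ = π * mW k l p := mul_one _
  · rw [mTerm_zero p hj]
    rw [integral_zero]
    exact mul_nonneg Real.pi_pos.le (mW_pos p).le



/-- The resonance kernel appearing in the definition of the weight `m`. -/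
noncomputable def mKernel (k l : ℤ) (η τ : ℝ) : ℝ :=
  ∑' p : ℤ × ℤ,
    if p.2 ≠ 0 then
      (p.2:ℝ) ^ 2 /
        (((p.2:ℝ) ^ 2 + (η - (p.2:ℝ) * τ) ^ 2 + (p.1:ℝ) ^ 2) *
          (1 + ((p.2 - k : ℤ):ℝ) ^ 2 + ((p.1 - l : ℤ):ℝ) ^ 2) ^ 2)
    else 0

/-- The main weight `m`. -/
noncomputable def mWeight (C₀ t : ℝ) (k l : ℤ) (η : ℝ) : ℝ :=
  Real.exp (C₀ * ∫ τ in Set.Iic t, mKernel k l η τ)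

lemma mKernel_eq (k l : ℤ) (η τ : ℝ) : mKernel k l η τ = ∑' p, mTerm k l η p τ := rfl

variable {k l : ℤ} {η : ℝ}

lemma mKernel_cont : Continuous (mKernel k l η) := by
  simp only [funext fun τ => mKernel_eq k l η τ]
  refine continuous_tsum mTerm_cont (sumW k l) (fun p x => ?_)
  rw [Real.norm_of_nonneg (mTerm_nonneg p x)]
  exact mTerm_le p x

lemma mKernel_nonneg (τ : ℝ) : 0 ≤ mKernel k l η τ := by
  rw [mKernel_eq]
  exact tsum_nonneg fun p => mTerm_nonneg p τ

lemma mTerm_summable (τ : ℝ) : Summable (fun p => mTerm k l η p τ) :=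
  (sumW k l).of_nonneg_of_le (fun p => mTerm_nonneg p τ) (fun p => mTerm_le p τ)

lemma mKernel_integrable : Integrable (mKernel k l η) := by
  refine ⟨mKernel_cont.aestronglyMeasurable, ?_⟩
  rw [HasFiniteIntegral]
  have step1 : ∀ τ : ℝ, (‖mKernel k l η τ‖₊ : ENNReal) ≤
      ∑' p, (‖mTerm k l η p τ‖₊ : ENNReal) := by
    intro τ
    have hns : Summable (fun p => ‖mTerm k l η p τ‖₊) := by
      rw [← NNReal.summable_coe]
      exact (mTerm_summable τ).abs.congr fun p => (Real.norm_eq_abs _).symm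
    rw [mKernel_eq, ← ENNReal.coe_tsum hns]
    exact_mod_cast nnnorm_tsum_le hns
  calc ∫⁻ τ, (‖mKernel k l η τ‖₊ : ENNReal)
      ≤ ∫⁻ τ, ∑' p, (‖mTerm k l η p τ‖₊ : ENNReal) := lintegral_mono step1
    _ = ∑' p, ∫⁻ τ, (‖mTerm k l η p τ‖₊ : ENNReal) :=
        lintegral_tsum fun p => ((mTerm_cont p).measurable.nnnorm.coe_nnreal_ennreal).aemeasurable
    _ ≤ ∑' p : ℤ × ℤ, ENNReal.ofReal (π * mW k l p) := by
        refine ENNReal.tsum_le_tsum fun p => ?_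
        have h1 : ∫⁻ τ, (‖mTerm k l η p τ‖₊ : ENNReal)
            = ENNReal.ofReal (∫ τ, mTerm k l η p τ) := by
          rw [ofReal_integral_eq_lintegral_ofReal (mTerm_integrable p)
            (Filter.Eventually.of_forall fun τ => mTerm_nonneg p τ)]
          refine lintegral_congr fun τ => ?_
          rw [← enorm_eq_nnnorm, ← ofReal_norm, Real.norm_of_nonneg (mTerm_nonneg p τ)]
        rw [h1]
        exact ENNReal.ofReal_le_ofReal (mTerm_integral_le p)
    _ = ENNReal.ofReal (∑' p, π * mW k l p) := by
        rw [ENNReal.ofReal_tsum_of_nonneg (fun p => mul_nonneg Real.pi_pos.le (mW_pos p).le)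
          ((sumW k l).mul_left π)]
    _ < ⊤ := ENNReal.ofReal_lt_top

lemma mKernel_integral_le :
    ∫ τ : ℝ, mKernel k l η τ ≤ π * ∑' p : ℤ × ℤ, ((1 + (p.2:ℝ)^2 + (p.1:ℝ)^2)^2)⁻¹ := by
  have hnorm : ∀ p : ℤ × ℤ, (∫ τ : ℝ, ‖mTerm k l η p τ‖) = ∫ τ : ℝ, mTerm k l η p τ :=
    fun p => by simp_rw [fun τ => Real.norm_of_nonneg (mTerm_nonneg (k:=k) (l:=l) (η:=η) p τ)]
  have hsumint : Summable (fun p : ℤ × ℤ => ∫ τ : ℝ, mTerm k l η p τ) := by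
    refine ((sumW k l).mul_left π).of_nonneg_of_le
      (fun p => integral_nonneg fun τ => mTerm_nonneg p τ) (fun p => mTerm_integral_le p)
  have h := integral_tsum_of_summable_integral_norm (fun p : ℤ × ℤ => mTerm_integrable p)
    (by rw [funext hnorm]; exact hsumint)
  simp only [funext fun τ => mKernel_eq k l η τ]
  rw [← h, ← sumW_eq k l, ← tsum_mul_left]
  exact Summable.tsum_le_tsum (fun p => mTerm_integral_le p) hsumint ((sumW k l).mul_left π)

/-- Lemma A.2 (boundedness of `m`): the weight `m` is well defined (the kernel is
integrable on `(−∞,t]`) and satisfies `1 ≤ m ≤ K` with `K` depending only on `C₀`. -/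
theorem stmt15 (C₀ : ℝ) (hC₀ : 0 < C₀) :
    ∃ K : ℝ, ∀ (t : ℝ) (k l : ℤ) (η : ℝ),
      MeasureTheory.IntegrableOn (fun τ : ℝ => mKernel k l η τ) (Set.Iic t) ∧
      1 ≤ mWeight C₀ t k l η ∧ mWeight C₀ t k l η ≤ K := by
  refine ⟨Real.exp (C₀ * (π * ∑' p : ℤ × ℤ, ((1 + (p.2:ℝ)^2 + (p.1:ℝ)^2)^2)⁻¹)),
    fun t k l η => ?_⟩
  have hInt : Integrable (mKernel k l η) := mKernel_integrable
  refine ⟨hInt.integrableOn, ?_, ?_⟩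
  · rw [mWeight, ← Real.exp_zero]
    apply Real.exp_le_exp.2
    exact mul_nonneg hC₀.le (setIntegral_nonneg measurableSet_Iic fun τ _ => mKernel_nonneg τ)
  · rw [mWeight]
    apply Real.exp_le_exp.2
    apply mul_le_mul_of_nonneg_left _ hC₀.le
    calc ∫ τ in Set.Iic t, mKernel k l η τ ≤ ∫ τ, mKernel k l η τ :=
          setIntegral_le_integral hInt (Filter.Eventually.of_forall fun τ => mKernel_nonneg τ)
      _ ≤ _ := mKernel_integral_le
end
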